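/- Let E be a trace-preserving positive linear map on n×n complex matrices, and ρ_φ a density matrix such that the sequence E^{n_i}(ρ_φ) converges to ρ_φ for some increasing sequence n_i → ∞. If additionally E = U ∘ M where U is conjugation by a unitary and M(X) = Σ_s M_s X M_s is a nonselective bare measurement (M_s ≥ 0, Σ_s M_s² = I), and E(ρ_φ) = ρ_φ (fixed-point cycle case), then S(M(ρ_φ)) = S(ρ_φ) and hence M(ρ_φ) = ρ_φ. -/

import Mathlib

open scoped ComplexOrder Classical

/-- The von Neumann entropy `S(ρ) = −Tr(ρ log ρ)` of a Hermitian matrix, computed from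
its eigenvalues with the convention `0 log 0 = 0` (and set to `0` on non-Hermitian input). -/
noncomputable def vonNeumannEntropy {n : ℕ} (ρ : Matrix (Fin n) (Fin n) ℂ) : ℝ :=
  if h : ρ.IsHermitian then ∑ i, Real.negMulLog (h.eigenvalues i) else 0

namespace SteadyCycleAux

open Matrix

variable {n : ℕ}

/-- A matrix viewed as a Euclidean vector (for the Frobenius inner product). -/
noncomputable def vec (A : Matrix (Fin n) (Fin n) ℂ) : EuclideanSpace ℂ (Fin n × Fin n) :=
  WithLp.toLp 2 (fun p : Fin n × Fin n => A p.1 p.2)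

lemma trace_eq_inner (A B : Matrix (Fin n) (Fin n) ℂ) :
    (Aᴴ * B).trace = (inner ℂ (vec A) (vec B) : ℂ) := by
  simp only [Matrix.trace, Matrix.diag, Matrix.mul_apply, Matrix.conjTranspose_apply,
    PiLp.inner_apply, RCLike.inner_apply, vec, Fintype.sum_prod_type, RCLike.star_def, PiLp.toLp_apply, mul_comm]
  exact Finset.sum_comm

lemma trace_self_re (A : Matrix (Fin n) (Fin n) ℂ) :
    ((Aᴴ * A).trace).re = ‖vec A‖ ^ 2 := by
  rw [trace_eq_inner, ← inner_self_eq_norm_sq (𝕜 := ℂ)]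
  rfl

lemma trace_self_re_nonneg (A : Matrix (Fin n) (Fin n) ℂ) :
    0 ≤ ((Aᴴ * A).trace).re := by
  rw [trace_self_re]; positivity

lemma eq_zero_of_trace_self_re_nonpos (A : Matrix (Fin n) (Fin n) ℂ)
    (h : ((Aᴴ * A).trace).re ≤ 0) : A = 0 := by
  rw [trace_self_re] at h
  have : ‖vec A‖ = 0 := by nlinarith [norm_nonneg (vec A)]
  have hv : vec A = 0 := norm_eq_zero.mp this
  ext i j
  have := congrArg (fun v => v (i, j)) hv
  simpa [vec] using this

lemma cs_re (A B : Matrix (Fin n) (Fin n) ℂ) (h : (Aᴴ * A).trace = (Bᴴ * B).trace) :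
    ((Aᴴ * B).trace).re ≤ ((Aᴴ * A).trace).re := by
  have hnorm : ‖vec A‖ = ‖vec B‖ := by
    have h2 : ‖vec A‖ ^ 2 = ‖vec B‖ ^ 2 := by
      rw [← trace_self_re, ← trace_self_re, h]
    nlinarith [norm_nonneg (vec A), norm_nonneg (vec B)]
  calc ((Aᴴ * B).trace).re
      = (inner ℂ (vec A) (vec B) : ℂ).re := by rw [trace_eq_inner]
    _ ≤ ‖(inner ℂ (vec A) (vec B) : ℂ)‖ := Complex.re_le_norm _
    _ = ‖(inner ℂ (vec A) (vec B) : ℂ)‖ := rfl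
    _ ≤ ‖vec A‖ * ‖vec B‖ := norm_inner_le_norm _ _
    _ = ‖vec A‖ ^ 2 := by rw [← hnorm]; ring
    _ = ((Aᴴ * A).trace).re := (trace_self_re A).symm

lemma trace_cyc4 (A B C D : Matrix (Fin n) (Fin n) ℂ) :
    (A * B * C * D).trace = (D * A * B * C).trace := by
  rw [Matrix.trace_mul_comm (A * B * C) D, ← Matrix.mul_assoc, ← Matrix.mul_assoc]

end SteadyCycleAux

set_option maxHeartbeats 1000000 in
open Matrix Filter in
/-- In the steady regime of a cycle `E = U ∘ M` (a bare measurement followed by a unitary)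
with a recurrent state `ρφ` that is a fixed point of `E`, the measurement preserves the
entropy of `ρφ` and is nondisturbing: `M(ρφ) = ρφ`. -/
theorem steady_cycle_measurement_nondisturbing {n m : ℕ}
    (M : Fin m → Matrix (Fin n) (Fin n) ℂ)
    (hpsd : ∀ s, (M s).PosSemidef)
    (hkraus : ∑ s, M s * M s = 1)
    (U : Matrix (Fin n) (Fin n) ℂ) (hU : U ∈ Matrix.unitaryGroup (Fin n) ℂ)
    (E : Matrix (Fin n) (Fin n) ℂ → Matrix (Fin n) (Fin n) ℂ)
    (hE : ∀ ρ, E ρ = U * (∑ s, M s * ρ * M s) * Uᴴ)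
    (ρφ : Matrix (Fin n) (Fin n) ℂ) (hρφ : ρφ.PosSemidef) (hρφtr : ρφ.trace = 1)
    (ni : ℕ → ℕ) (hmono : StrictMono ni)
    (hrec : Tendsto (fun i => E^[ni i] ρφ) atTop (nhds ρφ))
    (hfix : E ρφ = ρφ) :
    vonNeumannEntropy (∑ s, M s * ρφ * M s) = vonNeumannEntropy ρφ
    ∧ ∑ s, M s * ρφ * M s = ρφ := by
  set σ : Matrix (Fin n) (Fin n) ℂ := ∑ s, M s * ρφ * M s with hσdef
  have hρH : ρφᴴ = ρφ := hρφ.1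
  have hMH : ∀ s, (M s)ᴴ = M s := fun s => (hpsd s).1
  have hσH : σᴴ = σ := by
    rw [hσdef, Matrix.conjTranspose_sum]
    refine Finset.sum_congr rfl fun s _ => ?_
    simp [Matrix.conjTranspose_mul, hMH s, hρH, Matrix.mul_assoc]
  have hUU : Uᴴ * U = 1 := by
    have := hU.1
    rwa [Matrix.star_eq_conjTranspose] at this
  have hρσ : U * σ * Uᴴ = ρφ := by rw [← hE]; exact hfix
  -- key cyclic trace identity
  have key : ∀ X Y : Matrix (Fin n) (Fin n) ℂ,
      ∑ s, (X * M s * Y * M s).trace = ((∑ s, M s * X * M s) * Y).trace := by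
    intro X Y
    rw [Matrix.sum_mul, Matrix.trace_sum]
    exact Finset.sum_congr rfl fun s _ => SteadyCycleAux.trace_cyc4 X (M s) Y (M s)
  -- (i) trace (ρ²) = trace (σ²)
  have hT1T2 : (ρφ * ρφ).trace = (σ * σ).trace := by
    rw [← hρσ]
    have e : U * σ * Uᴴ * (U * σ * Uᴴ) = U * (σ * σ) * Uᴴ := by
      simp only [Matrix.mul_assoc]
      rw [← Matrix.mul_assoc Uᴴ U, hUU, Matrix.one_mul]
    rw [e, Matrix.trace_mul_comm (U * (σ * σ)) Uᴴ, ← Matrix.mul_assoc, hUU, Matrix.one_mul]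
  -- traces of the cross terms
  have hρρ : ∑ s, (ρφ * M s * ρφ * M s).trace = (ρφ * σ).trace := by
    rw [key ρφ ρφ, ← hσdef, Matrix.trace_mul_comm]
  have hρσ' : ∑ s, (ρφ * M s * σ * M s).trace = (σ * σ).trace := by
    rw [key ρφ σ, ← hσdef]
  have hσρ' : ∑ s, (σ * M s * ρφ * M s).trace = (σ * σ).trace := by
    have e : ∀ s, (σ * M s * ρφ * M s).trace = (ρφ * M s * σ * M s).trace := by
      intro s
      rw [SteadyCycleAux.trace_cyc4 σ (M s) ρφ (M s),
        SteadyCycleAux.trace_cyc4 (M s) σ (M s) ρφ]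
    rw [Finset.sum_congr rfl fun s _ => e s]
    exact hρσ'
  -- (iii) positivity of the measurement superoperator
  have hpos : 0 ≤ ∑ s, (((ρφ - σ) * M s * (ρφ - σ) * M s).trace).re := by
    refine Finset.sum_nonneg fun s _ => ?_
    obtain ⟨Q, hQH, hQQ⟩ : ∃ Q : Matrix (Fin n) (Fin n) ℂ, Qᴴ = Q ∧ Q * Q = M s := by
      open scoped MatrixOrder in
      exact ⟨CFC.sqrt (M s), (CFC.sqrt_nonneg (M s)).posSemidef.1,
        CFC.sqrt_mul_sqrt_self (M s) (hpsd s).nonneg⟩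
    set X := ρφ - σ with hX
    have hXH : Xᴴ = X := by rw [hX, Matrix.conjTranspose_sub, hρH, hσH]
    have hHH : (Q * X * Q)ᴴ * (Q * X * Q) = Q * (X * M s * X * Q) := by
      simp only [Matrix.conjTranspose_mul, hQH, hXH]
      simp only [Matrix.mul_assoc]
      rw [← Matrix.mul_assoc Q Q (X * Q), hQQ]
    have h1 : (X * M s * X * M s).trace = ((Q * X * Q)ᴴ * (Q * X * Q)).trace := by
      rw [hHH, Matrix.trace_mul_comm Q (X * M s * X * Q),
        Matrix.mul_assoc (X * M s * X) Q Q, hQQ]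
    rw [h1]
    exact SteadyCycleAux.trace_self_re_nonneg _
  -- (iv) contraction : Σ trace(σ Mₛ σ Mₛ) ≤ trace(σ²)
  have hcontr : ∑ s, ((σ * M s * σ * M s).trace).re ≤ ((σ * σ).trace).re := by
    have hstep : ∀ s, ((σ * M s * σ * M s).trace).re ≤ ((M s * M s * (σ * σ)).trace).re := by
      intro s
      have hA : (σ * M s)ᴴ = M s * σ := by
        rw [Matrix.conjTranspose_mul, hMH s, hσH]
      have e1 : (σ * M s)ᴴ * (M s * σ) = M s * σ * M s * σ := by
        rw [hA]; exact (Matrix.mul_assoc _ _ _).symm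
      have e2 : (σ * M s)ᴴ * (σ * M s) = M s * σ * σ * M s := by
        rw [hA]; exact (Matrix.mul_assoc _ _ _).symm
      have e3 : (M s * σ)ᴴ * (M s * σ) = σ * M s * M s * σ := by
        rw [Matrix.conjTranspose_mul, hMH s, hσH]
        exact (Matrix.mul_assoc _ _ _).symm
      have heq : ((σ * M s)ᴴ * (σ * M s)).trace = ((M s * σ)ᴴ * (M s * σ)).trace := by
        rw [e2, e3, SteadyCycleAux.trace_cyc4 (M s) σ σ (M s),
          SteadyCycleAux.trace_cyc4 σ (M s) (M s) σ, Matrix.mul_assoc,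
          Matrix.trace_mul_comm, ← Matrix.mul_assoc]
      have hcs := SteadyCycleAux.cs_re (σ * M s) (M s * σ) heq
      rw [e1, e2] at hcs
      have t1 : (M s * σ * M s * σ).trace = (σ * M s * σ * M s).trace :=
        (SteadyCycleAux.trace_cyc4 σ (M s) σ (M s)).symm
      have t2 : (M s * σ * σ * M s).trace = (M s * M s * (σ * σ)).trace := by
        rw [SteadyCycleAux.trace_cyc4 (M s) σ σ (M s)]
        congr 1
        exact Matrix.mul_assoc _ _ _
      rw [t1, t2] at hcs
      exact hcs
    calc ∑ s, ((σ * M s * σ * M s).trace).re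
        ≤ ∑ s, ((M s * M s * (σ * σ)).trace).re := Finset.sum_le_sum fun s _ => hstep s
      _ = ((σ * σ).trace).re := by
          rw [← Complex.re_sum, ← Matrix.trace_sum, ← Matrix.sum_mul, hkraus, Matrix.one_mul]
  -- expand positivity
  have hpos' : 0 ≤ ((ρφ * σ).trace).re - 2 * ((σ * σ).trace).re
      + ∑ s, ((σ * M s * σ * M s).trace).re := by
    have e : ∀ s, (((ρφ - σ) * M s * (ρφ - σ) * M s).trace).re
        = ((ρφ * M s * ρφ * M s).trace).re - ((ρφ * M s * σ * M s).trace).re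
          - ((σ * M s * ρφ * M s).trace).re + ((σ * M s * σ * M s).trace).re := by
      intro s
      have hexp : (ρφ - σ) * M s * (ρφ - σ) * M s
          = ρφ * M s * ρφ * M s - ρφ * M s * σ * M s
            - σ * M s * ρφ * M s + σ * M s * σ * M s := by noncomm_ring
      rw [hexp, Matrix.trace_add, Matrix.trace_sub, Matrix.trace_sub]
      simp [Complex.add_re, Complex.sub_re]
    have e2 : ∑ s, (((ρφ - σ) * M s * (ρφ - σ) * M s).trace).re
        = ((ρφ * σ).trace).re - ((σ * σ).trace).re - ((σ * σ).trace).re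
          + ∑ s, ((σ * M s * σ * M s).trace).re := by
      rw [Finset.sum_congr rfl fun s _ => e s]
      rw [Finset.sum_add_distrib, Finset.sum_sub_distrib, Finset.sum_sub_distrib,
        ← Complex.re_sum, ← Complex.re_sum, ← Complex.re_sum, hρρ, hρσ', hσρ']
    rw [e2] at hpos
    linarith
  -- conclude σ = ρφ
  have hfinal : σ = ρφ := by
    set X := ρφ - σ with hX
    have hXH : Xᴴ = X := by rw [hX, Matrix.conjTranspose_sub, hρH, hσH]
    have hXX : (Xᴴ * X).trace = (ρφ * ρφ).trace - (ρφ * σ).trace - (σ * ρφ).trace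
        + (σ * σ).trace := by
      rw [hXH, hX]
      have e : (ρφ - σ) * (ρφ - σ) = ρφ * ρφ - ρφ * σ - σ * ρφ + σ * σ := by noncomm_ring
      rw [e, Matrix.trace_add, Matrix.trace_sub, Matrix.trace_sub]
    have hre : ((Xᴴ * X).trace).re ≤ 0 := by
      rw [hXX, Matrix.trace_mul_comm σ ρφ]
      simp only [Complex.add_re, Complex.sub_re]
      have h12 : ((ρφ * ρφ).trace).re = ((σ * σ).trace).re := by rw [hT1T2]
      linarith
    have hz := SteadyCycleAux.eq_zero_of_trace_self_re_nonpos X hre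
    rw [hX, sub_eq_zero] at hz
    exact hz.symm
  exact ⟨by rw [hfinal], hfinal⟩
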